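/- arXiv:1009.0695 — 3 statements merged into one kernel-verified Lean document; each statement's English description precedes it below -/
import Mathlib

section
/- Let η > 0 and let Δ : ℝ → ℝ be a continuously differentiable function with |Δ(x)| ≤ 1 for all x, Δ(x) → 0 as |x| → ∞, and such that e := sup_{x ∈ ℝ} |Δ(x)| satisfies |Δ′(x)| ≤ e/η for all x. Then sup_{x ∈ ℝ} |(Δ * χ_η)(x)| ≥ e/5, where * denotes convolution. -/
open MeasureTheory Filter

/-- The normalization constant `g = ∫_{-1}^{1} exp(-1/(1-x²)) dx`. -/
noncomputable def bumpNorm : ℝ := ∫ x in (-1 : ℝ)..1, Real.exp (-1 / (1 - x ^ 2))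

/-- The smooth bump `χ_η`, a probability density supported in `(-η, η)`. -/
noncomputable def chiBump (η : ℝ) (x : ℝ) : ℝ :=
  if |x| < η then (1 / (bumpNorm * η)) * Real.exp (-1 / (1 - (x / η) ^ 2)) else 0

noncomputable def bfun (x : ℝ) : ℝ := Real.exp (-1 / (1 - x ^ 2))

lemma bfun_pos (x : ℝ) : 0 < bfun x := Real.exp_pos _

lemma bfun_meas : Measurable bfun := by
  unfold bfun; fun_prop

lemma bfun_le_one {y : ℝ} (h : y ^ 2 ≤ 1) : bfun y ≤ 1 := by
  have h1 : (0:ℝ) ≤ 1 - y ^ 2 := by linarith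
  have : -1 / (1 - y ^ 2) ≤ 0 := by
    rcases eq_or_lt_of_le h1 with h2 | h2
    · rw [← h2]; simp
    · exact le_of_lt (div_neg_of_neg_of_pos (by norm_num) h2)
  calc bfun y ≤ Real.exp 0 := Real.exp_le_exp.mpr this
    _ = 1 := Real.exp_zero

lemma bfun_intble {a b : ℝ} (ha : -1 ≤ a) (hb : b ≤ 1) (hab : a ≤ b) :
    IntervalIntegrable bfun volume a b := by
  rw [intervalIntegrable_iff_integrableOn_Ioc_of_le hab]
  apply Measure.integrableOn_of_bounded (M := 1) (measure_Ioc_lt_top).ne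
    bfun_meas.aestronglyMeasurable
  filter_upwards [ae_restrict_mem measurableSet_Ioc] with x hx
  rw [Real.norm_eq_abs, abs_of_pos (bfun_pos x)]
  refine bfun_le_one ?_
  rw [Set.mem_Ioc] at hx
  nlinarith [hx.1, hx.2]

lemma exp_43_le : Real.exp (4/3 : ℝ) ≤ 4 := by
  have h3 : Real.exp ((3:ℕ) * (4/3 : ℝ)) = Real.exp (4/3) ^ 3 := Real.exp_nat_mul _ 3
  have h4 : Real.exp ((4:ℕ) * (1 : ℝ)) = Real.exp 1 ^ 4 := Real.exp_nat_mul _ 4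
  have he : Real.exp 1 < 2.7182818286 := Real.exp_one_lt_d9
  have hpos := Real.exp_pos (4/3 : ℝ)
  have h1pos := Real.exp_pos (1 : ℝ)
  have hlt : Real.exp (4/3) ^ 3 < 64 := by
    have heq : ((3:ℕ) : ℝ) * (4/3 : ℝ) = ((4:ℕ) : ℝ) * 1 := by norm_num
    rw [← h3, heq, h4]
    calc Real.exp 1 ^ 4 < 2.7182818286 ^ 4 := pow_lt_pow_left₀ he h1pos.le (by norm_num)
      _ < 64 := by norm_num
  by_contra hc
  push_neg at hc
  have : (4:ℝ) ^ 3 ≤ Real.exp (4/3) ^ 3 := pow_le_pow_left₀ (by norm_num) hc.le 3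
  norm_num at this
  linarith

lemma exp_neg43_ge : (1:ℝ)/4 ≤ Real.exp (-(4/3) : ℝ) := by
  have := Real.exp_neg (4/3 : ℝ)
  rw [this, ← one_div]
  exact (one_div_le_one_div (by norm_num) (Real.exp_pos _)).mpr exp_43_le

/-- The middle part of the bump integral. -/
noncomputable def bumpA : ℝ := ∫ x in (-(1/2) : ℝ)..(1/2 : ℝ), bfun x

lemma bumpA_ge : Real.exp (-(4/3)) ≤ bumpA := by
  have h : ∀ x ∈ Set.Icc (-(1/2) : ℝ) (1/2 : ℝ),
      (fun _ : ℝ => Real.exp (-(4/3) : ℝ)) x ≤ bfun x := by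
    intro x hx
    rw [Set.mem_Icc] at hx
    have h1 : (3:ℝ)/4 ≤ 1 - x ^ 2 := by nlinarith [hx.1, hx.2]
    have h2 : (0:ℝ) < 1 - x ^ 2 := by linarith
    refine Real.exp_le_exp.mpr ?_
    rw [neg_div, neg_le_neg_iff, div_le_iff₀ h2]
    nlinarith
  have := intervalIntegral.integral_mono_on (by norm_num : (-(1/2) : ℝ) ≤ 1/2)
    (intervalIntegrable_const) (bfun_intble (by norm_num) (by norm_num) (by norm_num)) h
  rw [intervalIntegral.integral_const, smul_eq_mul] at this
  unfold bumpA
  linarith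

lemma bumpB_le : (∫ x in (1/2 : ℝ)..(1 : ℝ), bfun x) ≤
    (49/100) * Real.exp (-(4/3)) + 1/100 := by
  have hsplit : (∫ x in (1/2 : ℝ)..(99/100 : ℝ), bfun x) +
      (∫ x in (99/100 : ℝ)..(1 : ℝ), bfun x) = ∫ x in (1/2 : ℝ)..(1 : ℝ), bfun x :=
    intervalIntegral.integral_add_adjacent_intervals
      (bfun_intble (by norm_num) (by norm_num) (by norm_num))
      (bfun_intble (by norm_num) (by norm_num) (by norm_num))
  have h1 : (∫ x in (1/2 : ℝ)..(99/100 : ℝ), bfun x) ≤ (49/100) * Real.exp (-(4/3)) := by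
    have h : ∀ x ∈ Set.Icc (1/2 : ℝ) (99/100 : ℝ),
        bfun x ≤ (fun _ : ℝ => Real.exp (-(4/3) : ℝ)) x := by
      intro x hx
      rw [Set.mem_Icc] at hx
      have h2 : (0:ℝ) < 1 - x ^ 2 := by nlinarith [hx.1, hx.2]
      refine Real.exp_le_exp.mpr ?_
      rw [neg_div, neg_le_neg_iff, le_div_iff₀ h2]
      nlinarith [hx.1]
    have := intervalIntegral.integral_mono_on (by norm_num : (1/2 : ℝ) ≤ 99/100)
      (bfun_intble (by norm_num) (by norm_num) (by norm_num)) intervalIntegrable_const h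
    rw [intervalIntegral.integral_const] at this
    calc (∫ x in (1/2 : ℝ)..(99/100 : ℝ), bfun x) ≤ (99/100 - 1/2) • Real.exp (-(4/3)) := this
      _ = (49/100) * Real.exp (-(4/3)) := by rw [smul_eq_mul]; ring
  have h2 : (∫ x in (99/100 : ℝ)..(1 : ℝ), bfun x) ≤ 1/100 := by
    have h : ∀ x ∈ Set.Icc (99/100 : ℝ) (1 : ℝ), bfun x ≤ (fun _ : ℝ => (1:ℝ)) x := by
      intro x hx
      rw [Set.mem_Icc] at hx
      exact bfun_le_one (by nlinarith [hx.1, hx.2])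
    have := intervalIntegral.integral_mono_on (by norm_num : (99/100 : ℝ) ≤ 1)
      (bfun_intble (by norm_num) (by norm_num) (by norm_num)) intervalIntegrable_const h
    rw [intervalIntegral.integral_const] at this
    calc (∫ x in (99/100 : ℝ)..(1 : ℝ), bfun x) ≤ (1 - 99/100) • (1:ℝ) := this
      _ = 1/100 := by norm_num
  linarith

lemma bumpNorm_eq : bumpNorm = bumpA + 2 * ∫ x in (1/2 : ℝ)..(1 : ℝ), bfun x := by
  have heven : (∫ x in (-1 : ℝ)..(-(1/2) : ℝ), bfun x) = ∫ x in (1/2 : ℝ)..(1 : ℝ), bfun x := by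
    have h := intervalIntegral.integral_comp_neg (a := (1/2 : ℝ)) (b := (1 : ℝ)) bfun
    rw [← h]
    apply intervalIntegral.integral_congr
    intro x _
    simp [bfun, neg_sq]
  have h1 : (∫ x in (-1 : ℝ)..(-(1/2) : ℝ), bfun x) + (∫ x in (-(1/2) : ℝ)..(1/2 : ℝ), bfun x)
      = ∫ x in (-1 : ℝ)..(1/2 : ℝ), bfun x :=
    intervalIntegral.integral_add_adjacent_intervals
      (bfun_intble (by norm_num) (by norm_num) (by norm_num))
      (bfun_intble (by norm_num) (by norm_num) (by norm_num))
  have h2 : (∫ x in (-1 : ℝ)..(1/2 : ℝ), bfun x) + (∫ x in (1/2 : ℝ)..(1 : ℝ), bfun x)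
      = ∫ x in (-1 : ℝ)..(1 : ℝ), bfun x :=
    intervalIntegral.integral_add_adjacent_intervals
      (bfun_intble (by norm_num) (by norm_num) (by norm_num))
      (bfun_intble (by norm_num) (by norm_num) (by norm_num))
  have hBN : bumpNorm = ∫ x in (-1 : ℝ)..(1 : ℝ), bfun x := rfl
  unfold bumpA
  rw [hBN, ← h2, ← h1, heven]
  ring

lemma bumpB_nonneg : 0 ≤ ∫ x in (1/2 : ℝ)..(1 : ℝ), bfun x :=
  intervalIntegral.integral_nonneg (by norm_num) (fun x _ => (bfun_pos x).le)

lemma bumpNorm_pos : 0 < bumpNorm := by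
  have := bumpA_ge
  have := Real.exp_pos (-(4/3) : ℝ)
  have := bumpB_nonneg
  rw [bumpNorm_eq]
  linarith

lemma bumpNorm_le : 2 * bumpNorm ≤ 5 * bumpA := by
  have hA := bumpA_ge
  have hB := bumpB_le
  have ha := exp_neg43_ge
  rw [bumpNorm_eq]
  nlinarith

lemma chi_eq (η : ℝ) : chiBump η =
    (Set.Ioo (-η) η).indicator (fun x => 1 / (bumpNorm * η) * bfun (x / η)) := by
  funext x
  simp only [chiBump, Set.indicator_apply, Set.mem_Ioo, bfun, abs_lt]

lemma chi_nonneg (η : ℝ) (t : ℝ) : 0 ≤ chiBump η t := by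
  unfold chiBump
  split
  · have := bumpNorm_pos
    rcases le_or_gt η 0 with h | h
    · exfalso; have := abs_nonneg t; linarith [lt_of_le_of_lt (abs_nonneg t) ‹|t| < η›]
    · positivity
  · exact le_rfl

lemma chi_supp {η t : ℝ} (h : η ≤ |t|) : chiBump η t = 0 := by
  unfold chiBump
  rw [if_neg (not_lt.mpr h)]

lemma chi_le (η : ℝ) (hη : 0 < η) (t : ℝ) : chiBump η t ≤ 1 / (bumpNorm * η) := by
  have hc : 0 < 1 / (bumpNorm * η) := by
    have := bumpNorm_pos; positivity
  unfold chiBump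
  split
  · rename_i h
    have h2 : (t / η) ^ 2 ≤ 1 := by
      rw [abs_lt] at h
      have : |t / η| ≤ 1 := by
        rw [abs_div, abs_of_pos hη, div_le_one hη, abs_le]
        constructor <;> linarith [h.1, h.2]
      nlinarith [abs_nonneg (t/η), sq_abs (t/η)]
    calc 1 / (bumpNorm * η) * Real.exp (-1 / (1 - (t / η) ^ 2))
        ≤ 1 / (bumpNorm * η) * 1 := by
          exact mul_le_mul_of_nonneg_left (bfun_le_one h2) hc.le
      _ = 1 / (bumpNorm * η) := mul_one _
  · exact hc.le

lemma chi_integrable {η : ℝ} (hη : 0 < η) : Integrable (chiBump η) := by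
  rw [chi_eq]
  refine (IntegrableOn.integrable_indicator ?_ measurableSet_Ioo)
  apply Measure.integrableOn_of_bounded (M := 1 / (bumpNorm * η)) (measure_Ioo_lt_top).ne
  · apply Measurable.aestronglyMeasurable
    unfold bfun; fun_prop
  · have hc : 0 < 1 / (bumpNorm * η) := by have := bumpNorm_pos; positivity
    filter_upwards [ae_restrict_mem measurableSet_Ioo] with x hx
    rw [Set.mem_Ioo] at hx
    have h2 : (x / η) ^ 2 ≤ 1 := by
      have : |x / η| ≤ 1 := by
        rw [abs_div, abs_of_pos hη, div_le_one hη, abs_le]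
        constructor <;> linarith [hx.1, hx.2]
      nlinarith [sq_abs (x/η), abs_nonneg (x/η)]
    rw [Real.norm_eq_abs, abs_of_pos (mul_pos hc (bfun_pos _))]
    calc 1 / (bumpNorm * η) * bfun (x / η) ≤ 1 / (bumpNorm * η) * 1 :=
          mul_le_mul_of_nonneg_left (bfun_le_one h2) hc.le
      _ = 1 / (bumpNorm * η) := mul_one _

lemma chi_total {η : ℝ} (hη : 0 < η) : ∫ t : ℝ, chiBump η t = 1 := by
  rw [chi_eq, integral_indicator measurableSet_Ioo]
  rw [← integral_Ioc_eq_integral_Ioo, ← intervalIntegral.integral_of_le (by linarith : -η ≤ η)]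
  rw [intervalIntegral.integral_const_mul, intervalIntegral.integral_comp_div bfun hη.ne']
  have h1 : -η / η = -1 := by field_simp
  have h2 : η / η = 1 := div_self hη.ne'
  rw [h1, h2, smul_eq_mul]
  have hBN : (∫ x in (-1 : ℝ)..(1 : ℝ), bfun x) = bumpNorm := rfl
  rw [hBN]
  have := bumpNorm_pos
  field_simp

lemma chi_mid {η : ℝ} (hη : 0 < η) :
    ∫ t in Set.Icc (-(η/2)) (η/2), chiBump η t = bumpA / bumpNorm := by
  have hcong : ∀ t ∈ Set.Icc (-(η/2)) (η/2),
      chiBump η t = 1 / (bumpNorm * η) * bfun (t / η) := by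
    intro t ht
    rw [Set.mem_Icc] at ht
    unfold chiBump bfun
    rw [if_pos (by rw [abs_lt]; constructor <;> linarith)]
  rw [setIntegral_congr_fun measurableSet_Icc hcong]
  rw [integral_Icc_eq_integral_Ioc,
    ← intervalIntegral.integral_of_le (by linarith : -(η/2) ≤ η/2)]
  rw [intervalIntegral.integral_const_mul, intervalIntegral.integral_comp_div bfun hη.ne']
  have h1 : -(η/2) / η = -(1/2) := by field_simp
  have h2 : (η/2) / η = 1/2 := by field_simp
  rw [h1, h2, smul_eq_mul]
  have hA : (∫ x in (-(1/2) : ℝ)..(1/2 : ℝ), bfun x) = bumpA := rfl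
  rw [hA]
  have := bumpNorm_pos
  field_simp

lemma conv_abs_le (η : ℝ) (hη : 0 < η) (Δ : ℝ → ℝ) (hbd : ∀ x, |Δ x| ≤ 1) (x : ℝ) :
    |∫ t : ℝ, Δ (x - t) * chiBump η t| ≤ 1 := by
  have hχint := chi_integrable hη
  calc |∫ t : ℝ, Δ (x - t) * chiBump η t| ≤ ∫ t : ℝ, |Δ (x - t) * chiBump η t| := by
        simpa only [Real.norm_eq_abs] using
          norm_integral_le_integral_norm (μ := volume) (fun t : ℝ => Δ (x - t) * chiBump η t)
    _ ≤ ∫ t : ℝ, chiBump η t := by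
        apply integral_mono_of_nonneg (ae_of_all _ fun t => abs_nonneg _) hχint
        apply ae_of_all
        intro t
        show |Δ (x - t) * chiBump η t| ≤ chiBump η t
        rw [abs_mul, abs_of_nonneg (chi_nonneg η t)]
        calc |Δ (x - t)| * chiBump η t ≤ 1 * chiBump η t :=
              mul_le_mul_of_nonneg_right (hbd _) (chi_nonneg η t)
          _ = chiBump η t := one_mul _
    _ = 1 := chi_total hη

lemma core_bound (η : ℝ) (hη : 0 < η) (e : ℝ) (hepos : 0 < e) (Δ : ℝ → ℝ)
    (hcont : Continuous Δ) (hbd : ∀ x, |Δ x| ≤ 1) (x₀ : ℝ) (hx₀ : Δ x₀ = e)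
    (hlip : ∀ t : ℝ, |Δ (x₀ - t) - Δ x₀| ≤ e / η * |t|) :
    e / 5 ≤ ∫ t : ℝ, Δ (x₀ - t) * chiBump η t := by
  have gpos := bumpNorm_pos
  have hχint := chi_integrable hη
  have heη : 0 ≤ e / η := by positivity
  -- nonnegativity of the integrand
  have hΔnn : ∀ t : ℝ, 0 ≤ Δ (x₀ - t) * chiBump η t := by
    intro t
    by_cases h : |t| < η
    · have h1 := (abs_le.mp (hlip t)).1
      have h2 : e / η * |t| ≤ e / η * η := mul_le_mul_of_nonneg_left h.le heη
      have h3 : e / η * η = e := by field_simp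
      have : 0 ≤ Δ (x₀ - t) := by rw [hx₀] at h1; linarith
      exact mul_nonneg this (chi_nonneg η t)
    · rw [chi_supp (not_lt.mp h), mul_zero]
  -- on the middle interval the function is at least e/2
  have hmid : ∀ t ∈ Set.Icc (-(η/2)) (η/2), e / 2 ≤ Δ (x₀ - t) := by
    intro t ht
    rw [Set.mem_Icc] at ht
    have habs : |t| ≤ η / 2 := abs_le.mpr ⟨by linarith [ht.1], ht.2⟩
    have h1 := (abs_le.mp (hlip t)).1
    have h2 : e / η * |t| ≤ e / η * (η / 2) := mul_le_mul_of_nonneg_left habs heη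
    have h3 : e / η * (η / 2) = e / 2 := by field_simp
    rw [hx₀] at h1; linarith
  -- the minorant
  set h : ℝ → ℝ := (Set.Icc (-(η/2)) (η/2)).indicator (fun t => e / 2 * chiBump η t) with hh
  have hint : Integrable h := (hχint.const_mul (e/2)).indicator measurableSet_Icc
  have hprodmeas : AEStronglyMeasurable (fun t : ℝ => Δ (x₀ - t) * chiBump η t) volume :=
    ((hcont.comp (continuous_const.sub continuous_id)).aestronglyMeasurable.mul
      hχint.aestronglyMeasurable)
  have hprod_int : Integrable (fun t : ℝ => Δ (x₀ - t) * chiBump η t) := by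
    apply hχint.mono hprodmeas
    apply ae_of_all
    intro t
    rw [Real.norm_eq_abs, Real.norm_eq_abs, abs_mul, abs_of_nonneg (chi_nonneg η t)]
    calc |Δ (x₀ - t)| * chiBump η t ≤ 1 * chiBump η t :=
          mul_le_mul_of_nonneg_right (hbd _) (chi_nonneg η t)
      _ = chiBump η t := one_mul _
  have hle : ∀ t : ℝ, h t ≤ Δ (x₀ - t) * chiBump η t := by
    intro t
    by_cases ht : t ∈ Set.Icc (-(η/2)) (η/2)
    · rw [hh, Set.indicator_of_mem ht]
      exact mul_le_mul_of_nonneg_right (hmid t ht) (chi_nonneg η t)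
    · rw [hh, Set.indicator_of_notMem ht]
      exact hΔnn t
  have hinth : ∫ t : ℝ, h t = e / 2 * (bumpA / bumpNorm) := by
    rw [hh, integral_indicator measurableSet_Icc, integral_const_mul, chi_mid hη]
  have hmono := integral_mono hint hprod_int hle
  rw [hinth] at hmono
  have h25 : 2 / 5 ≤ bumpA / bumpNorm := by
    rw [le_div_iff₀ gpos]
    linarith [bumpNorm_le]
  calc e / 5 = e / 2 * (2 / 5) := by ring
    _ ≤ e / 2 * (bumpA / bumpNorm) := mul_le_mul_of_nonneg_left h25 (by positivity)
    _ ≤ _ := hmono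

/-- Lemma 3 of the paper, smoothing inequality: if `|Δ| ≤ 1`,
`Δ → 0` at infinity, `e = sup |Δ|` and `|Δ'| ≤ e/η`, then
`sup |Δ * χ_η| ≥ e/5`. -/
theorem statement5 (η : ℝ) (hη : 0 < η) (Δ : ℝ → ℝ)
    (hC1 : ContDiff ℝ 1 Δ)
    (hbd : ∀ x, |Δ x| ≤ 1)
    (hlim : Filter.Tendsto Δ (Filter.cocompact ℝ) (nhds 0))
    (e : ℝ) (he : e = ⨆ x : ℝ, |Δ x|)
    (hder : ∀ x, |deriv Δ x| ≤ e / η) :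
    e / 5 ≤ ⨆ x : ℝ, |∫ t : ℝ, Δ (x - t) * chiBump η t| := by
  have hbdd : BddAbove (Set.range fun x => |Δ x|) := ⟨1, by rintro _ ⟨x, rfl⟩; exact hbd x⟩
  have he0 : 0 ≤ e := by
    rw [he]; exact Real.iSup_nonneg fun x => abs_nonneg _
  have hconvnn : (0:ℝ) ≤ ⨆ x : ℝ, |∫ t : ℝ, Δ (x - t) * chiBump η t| :=
    Real.iSup_nonneg fun x => abs_nonneg _
  have hconv_bdd : BddAbove (Set.range fun x => |∫ t : ℝ, Δ (x - t) * chiBump η t|) :=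
    ⟨1, by rintro _ ⟨x, rfl⟩; exact conv_abs_le η hη Δ hbd x⟩
  rcases eq_or_lt_of_le he0 with h0 | hepos
  · rw [← h0]; norm_num; exact hconvnn
  · have hcont := hC1.continuous
    -- find a global maximizer of |Δ|
    have habs : Tendsto (fun x => |Δ x|) (cocompact ℝ) (nhds 0) := by
      have := hlim.abs; rwa [abs_zero] at this
    have hev : ∀ᶠ x in cocompact ℝ, |Δ x| < e / 2 :=
      habs.eventually_lt_const (by positivity)
    obtain ⟨K, hK, hKs⟩ := mem_cocompact.mp hev
    set S := {x : ℝ | e / 2 ≤ |Δ x|} with hS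
    have hSK : S ⊆ K := by
      intro x hx
      by_contra h
      have h1 : |Δ x| < e / 2 := hKs h
      have h2 : e / 2 ≤ |Δ x| := hx
      linarith
    have hSclosed : IsClosed S := isClosed_le continuous_const hcont.abs
    have hScompact : IsCompact S := hK.of_isClosed_subset hSclosed hSK
    have hlt : e / 2 < ⨆ x : ℝ, |Δ x| := by rw [← he]; linarith
    obtain ⟨x₁, hx₁⟩ := exists_lt_of_lt_ciSup hlt
    have hSne : S.Nonempty := ⟨x₁, hx₁.le⟩
    obtain ⟨x₀, hx₀S, hmax⟩ := hScompact.exists_isMaxOn hSne hcont.abs.continuousOn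
    have hub : ∀ y, |Δ y| ≤ |Δ x₀| := by
      intro y
      by_cases hy : y ∈ S
      · exact hmax hy
      · simp only [hS, Set.mem_setOf_eq, not_le] at hy
        have : e / 2 ≤ |Δ x₀| := hx₀S
        linarith
    have heq : |Δ x₀| = e :=
      le_antisymm (he ▸ le_ciSup hbdd x₀) (he ▸ ciSup_le hub)
    -- Lipschitz bound from the derivative bound
    have hdiff : Differentiable ℝ Δ := hC1.differentiable one_ne_zero
    have hlipW : LipschitzWith ⟨e / η, by positivity⟩ Δ :=
      lipschitzWith_of_nnnorm_deriv_le hdiff fun x => by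
        exact NNReal.coe_le_coe.mp (show ((‖deriv Δ x‖₊ : NNReal) : ℝ) ≤ e / η by
          rw [coe_nnnorm, Real.norm_eq_abs]; exact hder x)
    have hlip : ∀ a t : ℝ, |Δ (a - t) - Δ a| ≤ e / η * |t| := by
      intro a t
      have h1 := hlipW.dist_le_mul (a - t) a
      rw [Real.dist_eq, Real.dist_eq] at h1
      have h2 : a - t - a = -t := by ring
      rw [h2, abs_neg] at h1
      exact h1
    -- conclude via the two sign cases
    have key : e / 5 ≤ |∫ t : ℝ, Δ (x₀ - t) * chiBump η t| := by
      rcases (abs_eq he0).mp heq with hpos | hneg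
      · exact (core_bound η hη e hepos Δ hcont hbd x₀ hpos (hlip x₀)).trans (le_abs_self _)
      · have hcore : e / 5 ≤ ∫ t : ℝ, -Δ (x₀ - t) * chiBump η t :=
          core_bound η hη e hepos (fun x => -Δ x) hcont.neg
            (fun x => by rw [abs_neg]; exact hbd x) x₀
            (show -Δ x₀ = e by rw [hneg]; ring)
            (fun t => by
              show |-Δ (x₀ - t) - -Δ x₀| ≤ e / η * |t|
              rw [show -Δ (x₀ - t) - -Δ x₀ = -(Δ (x₀ - t) - Δ x₀) by ring, abs_neg]
              exact hlip x₀ t)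
        have hneg_int : (∫ t : ℝ, -Δ (x₀ - t) * chiBump η t)
            = -∫ t : ℝ, Δ (x₀ - t) * chiBump η t := by
          rw [← integral_neg]
          congr 1
          funext t
          ring
        rw [hneg_int] at hcore
        exact hcore.trans (neg_le_abs _)
    exact key.trans (le_ciSup hconv_bdd x₀)
end

section
/- Let N ≥ 1 and let m be an integer with 0 ≤ m ≤ N. Then ∫_{U(N)} |tr U|^{2m} dμ_H(U) = m!. -/
open MeasureTheory Matrix Filter

/-- The (pi-type) measurable structure on complex `N × N` matrices. -/
noncomputable instance matMS (N : ℕ) : MeasurableSpace (Matrix (Fin N) (Fin N) ℂ) :=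
  inferInstanceAs (MeasurableSpace ((Fin N) → (Fin N) → ℂ))

/-- `X_N = Re (tr (A U)) / σ`, the normalized real part of `tr (A U)`. -/
noncomputable def XN {N : ℕ} (A : Matrix (Fin N) (Fin N) ℂ) (σ : ℝ)
    (U : Matrix.unitaryGroup (Fin N) ℂ) : ℝ :=
  (Matrix.trace (A * (U : Matrix (Fin N) (Fin N) ℂ))).re / σ

/-- The standard normal distribution function `Φ`. -/
noncomputable def stdGaussCDF (x : ℝ) : ℝ :=
  ∫ t in Set.Iic x, Real.exp (-t ^ 2 / 2) / Real.sqrt (2 * Real.pi)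

/-- The standard normal density `φ`. -/
noncomputable def stdGaussPDF (x : ℝ) : ℝ :=
  Real.exp (-x ^ 2 / 2) / Real.sqrt (2 * Real.pi)

/-- The characteristic function `ψ_N(ξ) = E[exp(i ξ X_N)]`. -/
noncomputable def charFn {N : ℕ} (A : Matrix (Fin N) (Fin N) ℂ) (σ : ℝ)
    (μ : Measure (Matrix.unitaryGroup (Fin N) ℂ)) (ξ : ℝ) : ℂ :=
  ∫ U, Complex.exp (Complex.I * (ξ : ℂ) * ((XN A σ U : ℝ) : ℂ)) ∂μ

namespace DS

open Polynomial
open scoped ComplexOrder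

variable {N m : ℕ}

/-- `m`-th tensor power of an `N×N` matrix, as a matrix on `Fin m → Fin N`. -/
noncomputable def TP (m : ℕ) (A : Matrix (Fin N) (Fin N) ℂ) :
    Matrix (Fin m → Fin N) (Fin m → Fin N) ℂ :=
  Matrix.of fun a b => ∏ k, A (a k) (b k)

lemma TP_apply (A : Matrix (Fin N) (Fin N) ℂ) (a b : Fin m → Fin N) :
    TP m A a b = ∏ k, A (a k) (b k) := rfl

lemma TP_mul (A B : Matrix (Fin N) (Fin N) ℂ) :
    TP m (A * B) = TP m A * TP m B := by
  ext a c
  rw [Matrix.mul_apply, TP_apply]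
  have : ∀ k : Fin m, (A * B) (a k) (c k) = ∑ j, A (a k) j * B j (c k) := fun k =>
    Matrix.mul_apply
  simp_rw [this]
  rw [Finset.prod_univ_sum]
  refine Finset.sum_congr rfl fun b _ => ?_
  rw [TP_apply, TP_apply, ← Finset.prod_mul_distrib]

lemma TP_one : TP m (1 : Matrix (Fin N) (Fin N) ℂ) = 1 := by
  ext a b
  rw [TP_apply]
  by_cases h : a = b
  · subst h
    simp [Matrix.one_apply]
  · obtain ⟨k, hk⟩ := Function.ne_iff.mp h
    rw [Matrix.one_apply_ne h, Finset.prod_eq_zero (Finset.mem_univ k)]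
    exact Matrix.one_apply_ne hk

lemma TP_conjTranspose (A : Matrix (Fin N) (Fin N) ℂ) :
    TP m Aᴴ = (TP m A)ᴴ := by
  ext a b
  simp [TP_apply, Matrix.conjTranspose_apply, map_prod]

/-- Index type for ρ. -/
abbrev Idx (N m : ℕ) := (Fin m → Fin N) × (Fin m → Fin N)

/-- ρ(A) = T_A ⊗ conj(T_A). -/
noncomputable def rho (m : ℕ) (A : Matrix (Fin N) (Fin N) ℂ) :
    Matrix (Idx N m) (Idx N m) ℂ :=
  Matrix.of fun p q => TP m A p.1 q.1 * (starRingEnd ℂ) (TP m A p.2 q.2)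

lemma rho_apply (A : Matrix (Fin N) (Fin N) ℂ) (p q : Idx N m) :
    rho m A p q = TP m A p.1 q.1 * (starRingEnd ℂ) (TP m A p.2 q.2) := rfl

lemma rho_mul (A B : Matrix (Fin N) (Fin N) ℂ) :
    rho m (A * B) = rho m A * rho m B := by
  ext p q
  rw [Matrix.mul_apply, rho_apply, TP_mul, Matrix.mul_apply, Matrix.mul_apply, map_sum,
    Finset.sum_mul_sum, Fintype.sum_prod_type]
  refine Finset.sum_congr rfl fun e _ => Finset.sum_congr rfl fun f _ => ?_
  rw [rho_apply, rho_apply, RingHom.map_mul]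
  ring

lemma trace_rho (A : Matrix (Fin N) (Fin N) ℂ) :
    Matrix.trace (rho m A) = ((‖Matrix.trace A‖) ^ (2 * m) : ℝ) := by
  have htr : Matrix.trace (TP m A) = (Matrix.trace A) ^ m := by
    rw [Matrix.trace, Matrix.trace]
    simp only [Matrix.diag_apply, TP_apply]
    have : (∑ x : Fin N, A x x) ^ m = ∏ _k : Fin m, (∑ x : Fin N, A x x) := by
      rw [Finset.prod_const, Finset.card_univ, Fintype.card_fin]
    rw [this, Finset.prod_univ_sum]
    rfl
  have : Matrix.trace (rho m A) = Matrix.trace (TP m A) *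
      (starRingEnd ℂ) (Matrix.trace (TP m A)) := by
    rw [Matrix.trace, Matrix.trace]
    simp only [Matrix.diag_apply]
    rw [Fintype.sum_prod_type, map_sum, Finset.sum_mul_sum]
    rfl
  rw [this, htr, Complex.mul_conj, Complex.normSq_eq_norm_sq, norm_pow, ← pow_mul, mul_comm m 2]

/-- unitary facts -/
lemma TP_mul_conjTranspose (U : Matrix (Fin N) (Fin N) ℂ)
    (hU : U ∈ Matrix.unitaryGroup (Fin N) ℂ) : TP m U * (TP m U)ᴴ = 1 := by
  rw [← TP_conjTranspose, ← TP_mul, ← Matrix.star_eq_conjTranspose,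
    (Matrix.mem_unitaryGroup_iff).mp hU, TP_one]

lemma TP_conjTranspose_mul (U : Matrix (Fin N) (Fin N) ℂ)
    (hU : U ∈ Matrix.unitaryGroup (Fin N) ℂ) : (TP m U)ᴴ * TP m U = 1 := by
  rw [← TP_conjTranspose, ← TP_mul, ← Matrix.star_eq_conjTranspose,
    (Matrix.mem_unitaryGroup_iff').mp hU, TP_one]

/-- vector on Idx as a matrix -/
def toMat (x : Idx N m → ℂ) : Matrix (Fin m → Fin N) (Fin m → Fin N) ℂ :=
  Matrix.of fun c d => x (c, d)

lemma rho_mulVec (A : Matrix (Fin N) (Fin N) ℂ) (x : Idx N m → ℂ) (p : Idx N m) :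
    (rho m A).mulVec x p = (TP m A * toMat x * (TP m A)ᴴ) p.1 p.2 := by
  rw [Matrix.mulVec, dotProduct, Matrix.mul_apply]
  simp_rw [Matrix.mul_apply]
  rw [Fintype.sum_prod_type]
  rw [Finset.sum_comm]
  refine Finset.sum_congr rfl fun d _ => ?_
  rw [Finset.sum_mul]
  refine Finset.sum_congr rfl fun c _ => ?_
  rw [rho_apply, Matrix.conjTranspose_apply]
  show TP m A p.1 c * (starRingEnd ℂ) (TP m A p.2 d) * x (c, d)
      = TP m A p.1 c * toMat x c d * (starRingEnd ℂ) (TP m A p.2 d)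
  show _ = TP m A p.1 c * x (c, d) * (starRingEnd ℂ) (TP m A p.2 d)
  ring

lemma rho_mulVec_eq_iff (U : Matrix (Fin N) (Fin N) ℂ)
    (hU : U ∈ Matrix.unitaryGroup (Fin N) ℂ) (x : Idx N m → ℂ) :
    (rho m U).mulVec x = x ↔ TP m U * toMat x = toMat x * TP m U := by
  constructor
  · intro h
    have h2 : TP m U * toMat x * (TP m U)ᴴ = toMat x := by
      ext c d
      have := congr_fun h (c, d)
      rw [rho_mulVec] at this
      exact this
    calc TP m U * toMat x = TP m U * toMat x * ((TP m U)ᴴ * TP m U) := by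
          rw [TP_conjTranspose_mul U hU, mul_one]
      _ = (TP m U * toMat x * (TP m U)ᴴ) * TP m U := (mul_assoc _ _ _).symm
      _ = toMat x * TP m U := by rw [h2]
  · intro h
    funext p
    rw [rho_mulVec]
    have : TP m U * toMat x * (TP m U)ᴴ = toMat x := by
      rw [h, mul_assoc, TP_mul_conjTranspose U hU, mul_one]
    rw [this]
    rfl

/-- The space of invariant vectors. -/
noncomputable def Wsub (N m : ℕ) : Submodule ℂ (Idx N m → ℂ) where
  carrier := {x | ∀ U : Matrix.unitaryGroup (Fin N) ℂ,
    (rho m (U : Matrix (Fin N) (Fin N) ℂ)).mulVec x = x}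
  add_mem' := by
    intro a b ha hb U
    rw [Matrix.mulVec_add, ha U, hb U]
  zero_mem' := by
    intro U
    rw [Matrix.mulVec_zero]
  smul_mem' := by
    intro c a ha U
    rw [Matrix.mulVec_smul, ha U]

lemma mem_Wsub (x : Idx N m → ℂ) :
    x ∈ Wsub N m ↔ ∀ U : Matrix.unitaryGroup (Fin N) ℂ,
      (rho m (U : Matrix (Fin N) (Fin N) ℂ)).mulVec x = x := Iff.rfl

lemma mem_Wsub_iff (x : Idx N m → ℂ) :
    x ∈ Wsub N m ↔ ∀ U : Matrix.unitaryGroup (Fin N) ℂ,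
      TP m (U : Matrix (Fin N) (Fin N) ℂ) * toMat x
        = toMat x * TP m (U : Matrix (Fin N) (Fin N) ℂ) := by
  rw [mem_Wsub]
  exact forall_congr' fun U => rho_mulVec_eq_iff (U : Matrix (Fin N) (Fin N) ℂ) U.2 x

/-- permutation matrices on tensor space -/
noncomputable def permMat (N : ℕ) (σ : Equiv.Perm (Fin m)) :
    Matrix (Fin m → Fin N) (Fin m → Fin N) ℂ :=
  Matrix.of fun c d => if d = c ∘ σ then 1 else 0

lemma TP_comm_permMat (A : Matrix (Fin N) (Fin N) ℂ) (σ : Equiv.Perm (Fin m)) :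
    TP m A * permMat N σ = permMat N σ * TP m A := by
  ext a b
  rw [Matrix.mul_apply, Matrix.mul_apply]
  have h1 : ∀ d : Fin m → Fin N, (b = d ∘ σ) ↔ (d = b ∘ σ.symm) := by
    intro d
    constructor
    · intro h; funext k; rw [h]; simp
    · intro h; funext k; rw [h]; simp
  have hL : ∑ d, TP m A a d * permMat N σ d b = TP m A a (b ∘ σ.symm) := by
    have : ∀ d, TP m A a d * permMat N σ d b
        = if d = b ∘ σ.symm then TP m A a d else 0 := by
      intro d
      show TP m A a d * (if b = d ∘ σ then 1 else 0) = _
      by_cases h : d = b ∘ σ.symm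
      · rw [if_pos ((h1 d).mpr h), if_pos h, mul_one]
      · rw [if_neg (fun hh => h ((h1 d).mp hh)), if_neg h, mul_zero]
    simp_rw [this]
    rw [Finset.sum_ite_eq' Finset.univ]
    simp
  have hR : ∑ c, permMat N σ a c * TP m A c b = TP m A (a ∘ σ) b := by
    have : ∀ c, permMat N σ a c * TP m A c b
        = if c = a ∘ σ then TP m A c b else 0 := by
      intro c
      show (if c = a ∘ σ then 1 else 0) * TP m A c b = _
      by_cases h : c = a ∘ σ
      · rw [if_pos h, if_pos h, one_mul]
      · rw [if_neg h, if_neg h, zero_mul]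
    simp_rw [this]
    rw [Finset.sum_ite_eq' Finset.univ]
    simp
  rw [hL, hR, TP_apply, TP_apply]
  exact (Fintype.prod_equiv σ (fun k => A (a (σ k)) (b k))
    (fun j => A (a j) (b (σ.symm j))) (fun k => by simp)).symm

/-- number of occurrences of the value `j` in `a` -/
def cnt (a : Fin m → Fin N) (j : Fin N) : ℕ := (Finset.univ.filter fun k => a k = j).card

lemma TP_diagonal (d : Fin N → ℂ) :
    TP m (Matrix.diagonal d) = Matrix.diagonal (fun a : Fin m → Fin N => ∏ k, d (a k)) := by
  ext a b
  rw [TP_apply]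
  by_cases h : a = b
  · subst h
    simp [Matrix.diagonal_apply_eq]
  · obtain ⟨k, hk⟩ := Function.ne_iff.mp h
    rw [Matrix.diagonal_apply_ne _ h, Finset.prod_eq_zero (Finset.mem_univ k)]
    exact Matrix.diagonal_apply_ne _ hk

lemma prod_apply_eq_pow_cnt (d : Fin N → ℂ) (a : Fin m → Fin N) :
    ∏ k, d (a k) = ∏ j, d j ^ cnt a j := by
  rw [← Finset.prod_fiberwise_of_maps_to (g := a) (t := Finset.univ)
    (fun k _ => Finset.mem_univ (a k)) (fun k => d (a k))]
  refine Finset.prod_congr rfl fun j _ => ?_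
  rw [cnt, ← Finset.prod_const]
  exact Finset.prod_congr rfl fun k hk => by rw [(Finset.mem_filter.mp hk).2]

lemma diag_unitary_mem (d : Fin N → ℂ) (hd : ∀ j, ‖d j‖ = 1) :
    Matrix.diagonal d ∈ Matrix.unitaryGroup (Fin N) ℂ := by
  rw [Matrix.mem_unitaryGroup_iff']
  rw [Matrix.star_eq_conjTranspose, Matrix.diagonal_conjTranspose]
  rw [Matrix.diagonal_mul_diagonal]
  have : ∀ j, star (d j) * d j = 1 := by
    intro j
    rw [Complex.star_def, Complex.normSq_eq_conj_mul_self.symm]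
    rw [← Complex.sq_norm, hd j]
    norm_num
  simp only [Pi.star_apply]
  rw [show (fun j => star (d j) * d j) = fun _ => (1:ℂ) from funext this]
  exact Matrix.diagonal_one

/-- the root of unity used to separate counts -/
noncomputable def sep (m : ℕ) : ℂ := Complex.exp ((Real.pi / (m + 1) : ℝ) * Complex.I)

lemma abs_sep (m : ℕ) : ‖sep m‖ = 1 := Complex.norm_exp_ofReal_mul_I _

lemma sep_pow_injective {α β : ℕ} (hα : α ≤ m) (hβ : β ≤ m)
    (h : sep m ^ α = sep m ^ β) : α = β := by
  rw [sep, ← Complex.exp_nat_mul, ← Complex.exp_nat_mul,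
    Complex.exp_eq_exp_iff_exists_int] at h
  obtain ⟨n, hn⟩ := h
  set θ : ℝ := Real.pi / (m + 1) with hθ
  have key' : ((((α : ℝ) - β) * θ : ℝ) : ℂ) * Complex.I
      = (((n : ℝ) * (2 * Real.pi) : ℝ) : ℂ) * Complex.I := by
    push_cast
    linear_combination hn
  have key : (((α : ℝ) - β) * θ : ℝ) = ((n : ℝ) * (2 * Real.pi) : ℝ) :=
    Complex.ofReal_inj.mp (mul_right_cancel₀ Complex.I_ne_zero key')
  have hm1 : (0:ℝ) < (m : ℝ) + 1 := by positivity
  have hπ : (0:ℝ) < Real.pi := Real.pi_pos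
  have h4 : (α : ℝ) - β = n * (2 * ((m:ℝ) + 1)) := by
    have hh : (((α : ℝ) - β)) * Real.pi = (n * (2 * ((m:ℝ) + 1))) * Real.pi := by
      rw [hθ] at key
      field_simp at key
      nlinarith [key]
    exact mul_right_cancel₀ (ne_of_gt hπ) hh
  have habs : |(α : ℝ) - β| ≤ m := by
    have h1 : (α : ℝ) ≤ m := by exact_mod_cast hα
    have h2 : (β : ℝ) ≤ m := by exact_mod_cast hβ
    have h3 : (0:ℝ) ≤ α := Nat.cast_nonneg α
    have h5 : (0:ℝ) ≤ β := Nat.cast_nonneg β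
    rw [abs_le]; constructor <;> linarith
  have hn0 : n = 0 := by
    by_contra hn0
    have h1n : (1 : ℝ) ≤ |(n : ℝ)| := by
      have : (1:ℤ) ≤ |n| := Int.one_le_abs hn0
      calc (1:ℝ) = ((1:ℤ) : ℝ) := by norm_num
        _ ≤ ((|n| : ℤ) : ℝ) := by exact_mod_cast this
        _ = |(n:ℝ)| := by push_cast; ring
    have hgt : 2 * ((m:ℝ) + 1) ≤ |(α : ℝ) - β| := by
      rw [h4, abs_mul, abs_of_nonneg (show (0:ℝ) ≤ 2 * ((m:ℝ)+1) by positivity)]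
      nlinarith
    linarith
  rw [hn0] at h4
  simp at h4
  have : (α : ℝ) = β := by linarith
  exact_mod_cast this

lemma cnt_le (a : Fin m → Fin N) (j : Fin N) : cnt a j ≤ m := by
  calc cnt a j ≤ Finset.univ.card := Finset.card_filter_le _ _
    _ = m := by simp

lemma support_of_comm (X : Matrix (Fin m → Fin N) (Fin m → Fin N) ℂ)
    (hU : ∀ U ∈ Matrix.unitaryGroup (Fin N) ℂ, TP m U * X = X * TP m U)
    {a b : Fin m → Fin N} (hab : cnt a ≠ cnt b) : X a b = 0 := by
  obtain ⟨j, hj⟩ := Function.ne_iff.mp hab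
  set d : Fin N → ℂ := fun i => if i = j then sep m else 1 with hd_def
  have hd : ∀ i, ‖d i‖ = 1 := by
    intro i
    by_cases h : i = j <;> simp [hd_def, h, abs_sep]
  have hcomm := hU _ (diag_unitary_mem d hd)
  rw [TP_diagonal] at hcomm
  have hent := congrArg (fun M => M a b) hcomm
  simp only [Matrix.diagonal_mul, Matrix.mul_diagonal] at hent
  have hprod : ∀ c : Fin m → Fin N, ∏ k, d (c k) = sep m ^ cnt c j := by
    intro c
    rw [prod_apply_eq_pow_cnt]
    rw [Finset.prod_eq_single j]
    · simp [hd_def]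
    · intro i _ hij
      simp [hd_def, hij]
    · intro h
      exact absurd (Finset.mem_univ j) h
  rw [hprod a, hprod b] at hent
  by_contra hX
  rw [mul_comm (X a b)] at hent
  exact hj (sep_pow_injective (cnt_le a j) (cnt_le b j) (mul_right_cancel₀ hX hent))

lemma diag_comm (X : Matrix (Fin m → Fin N) (Fin m → Fin N) ℂ)
    (hsupp : ∀ a b : Fin m → Fin N, cnt a ≠ cnt b → X a b = 0) (d : Fin N → ℂ) :
    TP m (Matrix.diagonal d) * X = X * TP m (Matrix.diagonal d) := by
  rw [TP_diagonal]
  ext a b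
  rw [Matrix.diagonal_mul, Matrix.mul_diagonal]
  by_cases h : X a b = 0
  · rw [h, mul_zero, zero_mul]
  · have hcnt : cnt a = cnt b := by
      by_contra hc
      exact h (hsupp a b hc)
    rw [prod_apply_eq_pow_cnt, prod_apply_eq_pow_cnt, hcnt, mul_comm]

open scoped MatrixOrder in
lemma exists_psd_sqrt {B : Matrix (Fin N) (Fin N) ℂ} (hB : B.PosSemidef) :
    ∃ S : Matrix (Fin N) (Fin N) ℂ, S.PosSemidef ∧ S * S = B :=
  ⟨CFC.sqrt B, (CFC.sqrt_nonneg B).posSemidef, CFC.sqrt_mul_sqrt_self B hB.nonneg⟩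

section Comm
variable (X : Matrix (Fin m → Fin N) (Fin m → Fin N) ℂ)

/-- commutation is multiplicative -/
lemma comm_mul {A B : Matrix (Fin N) (Fin N) ℂ}
    (hA : TP m A * X = X * TP m A) (hB : TP m B * X = X * TP m B) :
    TP m (A * B) * X = X * TP m (A * B) := by
  rw [TP_mul, mul_assoc, hB, ← mul_assoc, hA, mul_assoc]

variable (hU : ∀ U ∈ Matrix.unitaryGroup (Fin N) ℂ, TP m U * X = X * TP m U)

include hU

lemma comm_diag (d : Fin N → ℂ) :
    TP m (Matrix.diagonal d) * X = X * TP m (Matrix.diagonal d) :=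
  diag_comm X (fun a b hab => support_of_comm X hU hab) d

lemma comm_hermitian {A : Matrix (Fin N) (Fin N) ℂ} (hA : A.IsHermitian) :
    TP m A * X = X * TP m A := by
  have hspec := hA.spectral_theorem
  set V : Matrix (Fin N) (Fin N) ℂ := (hA.eigenvectorUnitary : Matrix (Fin N) (Fin N) ℂ)
  have hV : V ∈ Matrix.unitaryGroup (Fin N) ℂ := hA.eigenvectorUnitary.2
  have hVs : star V ∈ Matrix.unitaryGroup (Fin N) ℂ := by
    rw [Matrix.mem_unitaryGroup_iff, star_star]
    exact (Matrix.mem_unitaryGroup_iff').mp hV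
  rw [hspec]
  exact comm_mul X (comm_mul X (hU V hV) (comm_diag X hU _)) (hU (star V) hVs)

lemma comm_invertible {A : Matrix (Fin N) (Fin N) ℂ} (hA : IsUnit A.det) :
    TP m A * X = X * TP m A := by
  have hpsd : (Aᴴ * A).PosSemidef := Matrix.posSemidef_conjTranspose_mul_self A
  set S : Matrix (Fin N) (Fin N) ℂ := (exists_psd_sqrt hpsd).choose with hS_def
  have hS_psd : S.PosSemidef := (exists_psd_sqrt hpsd).choose_spec.1
  have hS_herm : S.IsHermitian := hS_psd.isHermitian
  have hSS : S * S = Aᴴ * A := (exists_psd_sqrt hpsd).choose_spec.2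
  have hdetS : IsUnit S.det := by
    have h1 : IsUnit (S.det * S.det) := by
      rw [← Matrix.det_mul, hSS, Matrix.det_mul, Matrix.det_conjTranspose]
      exact hA.star.mul hA
    exact isUnit_of_mul_isUnit_left h1
  have hinvH : (S⁻¹)ᴴ = S⁻¹ := by
    rw [Matrix.conjTranspose_nonsing_inv, hS_herm.eq]
  have hV : A * S⁻¹ ∈ Matrix.unitaryGroup (Fin N) ℂ := by
    rw [Matrix.mem_unitaryGroup_iff', Matrix.star_eq_conjTranspose, Matrix.conjTranspose_mul,
      hinvH]
    calc S⁻¹ * Aᴴ * (A * S⁻¹) = S⁻¹ * (Aᴴ * A) * S⁻¹ := by simp only [mul_assoc]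
      _ = S⁻¹ * (S * S) * S⁻¹ := by rw [hSS]
      _ = (S⁻¹ * S) * (S * S⁻¹) := by simp only [mul_assoc]
      _ = 1 := by rw [Matrix.nonsing_inv_mul S hdetS, Matrix.mul_nonsing_inv S hdetS, one_mul]
  have hAVS : A = (A * S⁻¹) * S := by
    rw [mul_assoc, Matrix.nonsing_inv_mul S hdetS, mul_one]
  rw [hAVS]
  exact comm_mul X (hU _ hV) (comm_hermitian X hU hS_herm)

/-- every matrix commutes with X (on the tensor-power level) -/
lemma comm_all (A : Matrix (Fin N) (Fin N) ℂ) :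
    TP m A * X = X * TP m A := by
  -- the exceptional set of real parameters
  set q : Polynomial ℂ := (-A).charpoly with hq_def
  have hq_monic : q.Monic := Matrix.charpoly_monic _
  have hq_ne : q ≠ 0 := hq_monic.ne_zero
  have hdet_eval : ∀ z : ℂ, q.eval z = (A + z • (1 : Matrix (Fin N) (Fin N) ℂ)).det := by
    intro z
    rw [hq_def, Matrix.charpoly, eval_det, Matrix.matPolyEquiv_charmatrix]
    rw [Polynomial.eval_sub, Polynomial.eval_X, Polynomial.eval_C]
    congr 1
    rw [Matrix.scalar_apply, sub_neg_eq_add, Matrix.smul_one_eq_diagonal]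
    rw [add_comm]
  have hEfin : {t : ℝ | (A + (t : ℂ) • (1 : Matrix (Fin N) (Fin N) ℂ)).det = 0}.Finite := by
    have h1 : {t : ℝ | (A + (t : ℂ) • (1 : Matrix (Fin N) (Fin N) ℂ)).det = 0}
        ⊆ (fun t : ℝ => (t : ℂ)) ⁻¹' {z : ℂ | q.IsRoot z} := by
      intro t ht
      simp only [Set.mem_preimage, Set.mem_setOf_eq, Polynomial.IsRoot]
      rw [hdet_eval]
      exact ht
    refine Set.Finite.subset ?_ h1
    exact (Polynomial.finite_setOf_isRoot hq_ne).preimage (fun x _ y _ h => Complex.ofReal_inj.mp h)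
  -- choose a sequence of good parameters tending to 0
  have hchoice : ∀ n : ℕ, ∃ t : ℝ, t ∈ Set.Ioo (0:ℝ) (1/(n+1))
      ∧ (A + (t : ℂ) • (1 : Matrix (Fin N) (Fin N) ℂ)).det ≠ 0 := by
    intro n
    have hIoo : (Set.Ioo (0:ℝ) (1/(n+1))).Infinite := by
      apply Set.Ioo_infinite
      positivity
    obtain ⟨t, ht⟩ := (hIoo.diff hEfin).nonempty
    exact ⟨t, ht.1, ht.2⟩
  choose u hu_mem hu_det using hchoice
  have hu_tendsto : Tendsto u atTop (nhds 0) := by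
    apply squeeze_zero (fun n => le_of_lt (hu_mem n).1) (fun n => le_of_lt (hu_mem n).2)
    exact tendsto_one_div_add_atTop_nhds_zero_nat
  -- entrywise limit argument
  ext a b
  set F : ℝ → ℂ := fun t =>
    (TP m (A + (t : ℂ) • (1 : Matrix (Fin N) (Fin N) ℂ)) * X) a b
      - (X * TP m (A + (t : ℂ) • (1 : Matrix (Fin N) (Fin N) ℂ))) a b with hF_def
  have hTP_cont : ∀ (c d : Fin m → Fin N),
      Continuous fun t : ℝ => TP m (A + (t : ℂ) • (1 : Matrix (Fin N) (Fin N) ℂ)) c d := by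
    intro c d
    simp only [TP_apply]
    apply continuous_finset_prod
    intro k _
    have : (fun t : ℝ => (A + (t : ℂ) • (1 : Matrix (Fin N) (Fin N) ℂ)) (c k) (d k))
        = fun t : ℝ => A (c k) (d k) + (t : ℂ) * (1 : Matrix (Fin N) (Fin N) ℂ) (c k) (d k) := by
      funext t
      rw [Matrix.add_apply, Matrix.smul_apply, smul_eq_mul]
    rw [this]
    exact continuous_const.add (Complex.continuous_ofReal.mul continuous_const)
  have hF_cont : Continuous F := by
    apply Continuous.sub
    · simp only [Matrix.mul_apply]
      apply continuous_finset_sum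
      intro c _
      exact (hTP_cont a c).mul continuous_const
    · simp only [Matrix.mul_apply]
      apply continuous_finset_sum
      intro c _
      exact continuous_const.mul (hTP_cont c b)
  have hF0 : ∀ n, F (u n) = 0 := by
    intro n
    have hcomm := comm_invertible X hU (isUnit_iff_ne_zero.mpr (hu_det n))
    rw [hF_def]
    simp only [hcomm, sub_self]
  have hlim1 : Tendsto (F ∘ u) atTop (nhds (F 0)) :=
    (hF_cont.continuousAt).tendsto.comp hu_tendsto
  have hlim2 : Tendsto (F ∘ u) atTop (nhds 0) := by
    rw [show F ∘ u = fun _ => (0:ℂ) from funext hF0]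
    exact tendsto_const_nhds
  have hF_zero : F 0 = 0 := tendsto_nhds_unique hlim1 hlim2
  have hA0 : A + ((0:ℝ) : ℂ) • (1 : Matrix (Fin N) (Fin N) ℂ) = A := by
    simp
  rw [hF_def] at hF_zero
  simp only [hA0] at hF_zero
  exact sub_eq_zero.mp hF_zero

end Comm
/-- the standard embedding `Fin m → Fin N` -/
def emb (hm : m ≤ N) : Fin m → Fin N := Fin.castLE hm

lemma emb_injective (hm : m ≤ N) : Function.Injective (emb hm) :=
  Fin.castLE_injective hm

/-- the invariant vectors indexed by permutations -/
noncomputable def wfun (σ : Equiv.Perm (Fin m)) : Idx N m → ℂ :=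
  fun p => if p.2 = p.1 ∘ σ then 1 else 0

lemma toMat_wfun (σ : Equiv.Perm (Fin m)) : toMat (wfun (N := N) σ) = permMat N σ := rfl

lemma wfun_mem (σ : Equiv.Perm (Fin m)) : wfun (N := N) σ ∈ Wsub N m := by
  rw [mem_Wsub_iff]
  intro U
  rw [toMat_wfun]
  exact TP_comm_permMat _ σ

lemma wfun_indep (hm : m ≤ N) :
    LinearIndependent ℂ (wfun (N := N) (m := m)) := by
  rw [Fintype.linearIndependent_iff]
  intro g hg σ
  have hτ := congr_fun hg (emb hm ∘ σ.symm, emb hm)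
  simp only [Finset.sum_apply, Pi.smul_apply, smul_eq_mul, Pi.zero_apply] at hτ
  have hterm : ∀ π : Equiv.Perm (Fin m),
      g π * wfun (N := N) π (emb hm ∘ σ.symm, emb hm)
        = if π = σ then g π else 0 := by
    intro π
    rw [wfun]
    by_cases h : π = σ
    · subst h
      rw [if_pos, if_pos rfl, mul_one]
      funext k
      simp [emb]
    · rw [if_neg h, if_neg, mul_zero]
      intro hc
      apply h
      have : ∀ k, emb hm k = emb hm (σ.symm (π k)) := fun k => congr_fun hc k
      have h2 : ∀ k, k = σ.symm (π k) := fun k => emb_injective hm (this k)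
      apply Equiv.ext
      intro k
      calc π k = σ (σ.symm (π k)) := (σ.apply_symm_apply _).symm
        _ = σ k := by rw [← h2 k]
  rw [Finset.sum_congr rfl (fun π _ => hterm π)] at hτ
  rw [Finset.sum_ite_eq' Finset.univ σ g] at hτ
  simpa using hτ

/-- function matrices -/
noncomputable def fmat (f : Fin N → Fin N) : Matrix (Fin N) (Fin N) ℂ :=
  Matrix.of fun i j => if i = f j then 1 else 0

lemma TP_fmat (f : Fin N → Fin N) (a b : Fin m → Fin N) :
    TP m (fmat f) a b = if a = f ∘ b then 1 else 0 := by
  rw [TP_apply]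
  by_cases h : a = f ∘ b
  · rw [if_pos h]
    apply Finset.prod_eq_one
    intro k _
    show (if a k = f (b k) then (1:ℂ) else 0) = 1
    have hk := congr_fun h k
    simp only [Function.comp_apply] at hk
    rw [if_pos hk]
  · rw [if_neg h]
    obtain ⟨k, hk⟩ := Function.ne_iff.mp h
    apply Finset.prod_eq_zero (Finset.mem_univ k)
    show (if a k = f (b k) then (1:ℂ) else 0) = 0
    simp only [Function.comp_apply] at hk
    rw [if_neg hk]

lemma fmat_identity (X : Matrix (Fin m → Fin N) (Fin m → Fin N) ℂ) (f : Fin N → Fin N)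
    (hcomm : TP m (fmat f) * X = X * TP m (fmat f)) (u w : Fin m → Fin N) :
    X u (f ∘ w) = ∑ c ∈ Finset.univ.filter (fun c : Fin m → Fin N => u = f ∘ c), X c w := by
  have hent := congrArg (fun M => M u w) hcomm
  simp only [Matrix.mul_apply] at hent
  have hL : ∑ c, TP m (fmat f) u c * X c w
      = ∑ c ∈ Finset.univ.filter (fun c : Fin m → Fin N => u = f ∘ c), X c w := by
    rw [Finset.sum_filter]
    refine Finset.sum_congr rfl fun c _ => ?_
    rw [TP_fmat]
    by_cases h : u = f ∘ c
    · rw [if_pos h, if_pos h, one_mul]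
    · rw [if_neg h, if_neg h, zero_mul]
  have hR : ∑ d, X u d * TP m (fmat f) d w = X u (f ∘ w) := by
    have : ∀ d, X u d * TP m (fmat f) d w = if d = f ∘ w then X u d else 0 := by
      intro d
      rw [TP_fmat]
      by_cases h : d = f ∘ w
      · rw [if_pos h, if_pos h, mul_one]
      · rw [if_neg h, if_neg h, mul_zero]
    simp_rw [this]
    rw [Finset.sum_ite_eq' Finset.univ]
    simp
  rw [hL] at hent
  rw [hR] at hent
  exact hent.symm

/-- counts determine a permutation relation with an injective function -/
lemma exists_perm_of_cnt_eq (hm : m ≤ N) (c : Fin m → Fin N)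
    (hcnt : cnt c = cnt (emb hm)) : ∃ σ : Equiv.Perm (Fin m), c = emb hm ∘ σ := by
  have hemb_le : ∀ j, cnt (emb hm) j ≤ 1 := by
    intro j
    apply Finset.card_le_one.mpr
    intro k1 hk1 k2 hk2
    exact emb_injective hm ((Finset.mem_filter.mp hk1).2.trans
      (Finset.mem_filter.mp hk2).2.symm)
  have hinj : Function.Injective c := by
    intro k1 k2 hk
    by_contra hne
    have h2 : ({k1, k2} : Finset (Fin m)) ⊆ Finset.univ.filter (fun k => c k = c k1) := by
      intro k hk'
      rcases Finset.mem_insert.mp hk' with h | h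
      · subst h; exact Finset.mem_filter.mpr ⟨Finset.mem_univ _, rfl⟩
      · rw [Finset.mem_singleton.mp h]
        exact Finset.mem_filter.mpr ⟨Finset.mem_univ _, hk.symm⟩
    have h3 : 2 ≤ cnt c (c k1) := by
      calc 2 = ({k1, k2} : Finset (Fin m)).card := by
            rw [Finset.card_insert_of_notMem (by simp [hne]), Finset.card_singleton]
        _ ≤ cnt c (c k1) := Finset.card_le_card h2
    have h4 := hemb_le (c k1)
    rw [← hcnt] at h4
    omega
  have hrange : ∀ k, ∃ k', emb hm k' = c k := by
    intro k
    have h1 : 0 < cnt c (c k) :=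
      Finset.card_pos.mpr ⟨k, Finset.mem_filter.mpr ⟨Finset.mem_univ _, rfl⟩⟩
    rw [hcnt] at h1
    obtain ⟨k', hk'⟩ := Finset.card_pos.mp h1
    exact ⟨k', (Finset.mem_filter.mp hk').2⟩
  choose σ0 hσ0 using hrange
  have hσ0_inj : Function.Injective σ0 := by
    intro k1 k2 hk
    apply hinj
    rw [← hσ0 k1, ← hσ0 k2, hk]
  have hσ0_bij : Function.Bijective σ0 := Finite.injective_iff_bijective.mp hσ0_inj
  refine ⟨Equiv.ofBijective σ0 hσ0_bij, ?_⟩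
  funext k
  exact (hσ0 k).symm

lemma x_eq_zero_of_vanish (hm : m ≤ N) (x : Idx N m → ℂ) (hx : x ∈ Wsub N m)
    (hv : ∀ σ : Equiv.Perm (Fin m), x (emb hm ∘ σ, emb hm) = 0) : x = 0 := by
  set X := toMat x with hX_def
  have hUc : ∀ U ∈ Matrix.unitaryGroup (Fin N) ℂ, TP m U * X = X * TP m U := by
    intro U hU
    exact (mem_Wsub_iff x).mp hx ⟨U, hU⟩
  have hall := comm_all X hUc
  have hsupp : ∀ a b : Fin m → Fin N, cnt a ≠ cnt b → X a b = 0 :=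
    fun a b hab => support_of_comm X hUc hab
  funext p
  obtain ⟨u, b⟩ := p
  set f : Fin N → Fin N := fun j => if h : (j : ℕ) < m then b ⟨(j : ℕ), h⟩ else j with hf_def
  have hf : f ∘ emb hm = b := by
    funext k
    have hk : ((emb hm k : Fin N) : ℕ) < m := by
      simp [emb]
    show (if h : ((emb hm k : Fin N) : ℕ) < m
        then b ⟨((emb hm k : Fin N) : ℕ), h⟩ else (emb hm k : Fin N)) = b k
    rw [dif_pos hk]
    congr 1
  have hid := fmat_identity X f (hall (fmat f)) u (emb hm)
  rw [hf] at hid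
  show x (u, b) = 0
  have : X u b = 0 := by
    rw [hid]
    apply Finset.sum_eq_zero
    intro c hc
    by_contra hc0
    have hcnt : cnt c = cnt (emb hm) := by
      by_contra hcc
      exact hc0 (hsupp c (emb hm) hcc)
    obtain ⟨σ, hσ⟩ := exists_perm_of_cnt_eq hm c hcnt
    apply hc0
    rw [hσ]
    exact hv σ
  exact this

/-- the dimension count -/
lemma finrank_Wsub (hm : m ≤ N) :
    Module.finrank ℂ (Wsub N m) = Nat.factorial m := by
  apply le_antisymm
  · -- upper bound via injection into functions on permutations
    set Φ : (Wsub N m) →ₗ[ℂ] (Equiv.Perm (Fin m) → ℂ) :=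
      { toFun := fun x σ => x.1 (emb hm ∘ σ, emb hm)
        map_add' := fun x y => rfl
        map_smul' := fun c x => rfl } with hΦ_def
    have hinj : Function.Injective Φ := by
      rw [injective_iff_map_eq_zero]
      intro x hx0
      have hv : ∀ σ : Equiv.Perm (Fin m), x.1 (emb hm ∘ σ, emb hm) = 0 := by
        intro σ
        exact congr_fun hx0 σ
      have := x_eq_zero_of_vanish hm x.1 x.2 hv
      exact Subtype.ext this
    have hle := LinearMap.finrank_le_finrank_of_injective hinj
    rw [Module.finrank_fintype_fun_eq_card] at hle
    rw [Fintype.card_perm, Fintype.card_fin] at hle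
    exact hle
  · -- lower bound via linearly independent family
    have hfam : LinearIndependent ℂ
        (fun σ : Equiv.Perm (Fin m) => (⟨wfun σ, wfun_mem σ⟩ : Wsub N m)) := by
      apply LinearIndependent.of_comp (Wsub N m).subtype
      exact wfun_indep hm
    have hcard := hfam.fintype_card_le_finrank
    rw [Fintype.card_perm, Fintype.card_fin] at hcard
    exact hcard

abbrev UG (N : ℕ) := Matrix.unitaryGroup (Fin N) ℂ

/-- measurability of the coercion -/
lemma measurable_entry (i j : Fin N) :
    Measurable (fun U : UG N => (U : Matrix (Fin N) (Fin N) ℂ) i j) := by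
  have h1 : Measurable (fun U : UG N => (U : Matrix (Fin N) (Fin N) ℂ)) :=
    measurable_subtype_coe
  have h2 : Measurable (fun A : Matrix (Fin N) (Fin N) ℂ => A i j) := by
    exact (measurable_pi_apply j).comp (measurable_pi_apply i)
  exact h2.comp h1

instance : MeasurableMul (UG N) := by
  constructor
  · intro c
    apply Measurable.subtype_mk
    show Measurable fun x : UG N => (c : Matrix (Fin N) (Fin N) ℂ) * (x : Matrix (Fin N) (Fin N) ℂ)
    apply measurable_pi_lambda
    intro i
    apply measurable_pi_lambda
    intro j
    have : (fun x : UG N => ((c : Matrix (Fin N) (Fin N) ℂ) * x) i j)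
        = fun x : UG N => ∑ k, (c : Matrix (Fin N) (Fin N) ℂ) i k
            * (x : Matrix (Fin N) (Fin N) ℂ) k j := by
      funext x; rw [Matrix.mul_apply]
    rw [this]
    exact Finset.measurable_sum _ fun k _ => (measurable_entry k j).const_mul _
  · intro c
    apply Measurable.subtype_mk
    show Measurable fun x : UG N => (x : Matrix (Fin N) (Fin N) ℂ) * (c : Matrix (Fin N) (Fin N) ℂ)
    apply measurable_pi_lambda
    intro i
    apply measurable_pi_lambda
    intro j
    have : (fun x : UG N => ((x : Matrix (Fin N) (Fin N) ℂ) * c) i j)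
        = fun x : UG N => ∑ k, (x : Matrix (Fin N) (Fin N) ℂ) i k
            * (c : Matrix (Fin N) (Fin N) ℂ) k j := by
      funext x; rw [Matrix.mul_apply]
    rw [this]
    exact Finset.measurable_sum _ fun k _ => (measurable_entry i k).mul_const _

lemma measurable_rho_entry (p q : Idx N m) :
    Measurable (fun U : UG N => rho m (U : Matrix (Fin N) (Fin N) ℂ) p q) := by
  simp only [rho_apply, TP_apply]
  apply Measurable.mul
  · exact Finset.measurable_prod _ fun k _ => measurable_entry _ _
  · exact (continuous_star (R := ℂ)).measurable.comp
      (Finset.measurable_prod _ fun k _ => measurable_entry _ _)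

/-- entries of unitary matrices are bounded by 1 -/
lemma abs_entry_le_one {U : Matrix (Fin N) (Fin N) ℂ}
    (hU : U ∈ Matrix.unitaryGroup (Fin N) ℂ) (i j : Fin N) : ‖U i j‖ ≤ 1 := by
  have h := (Matrix.mem_unitaryGroup_iff').mp hU
  have h2 : (star U * U) j j = 1 := by rw [h]; simp [Matrix.one_apply]
  rw [Matrix.mul_apply] at h2
  have h3 : ∀ k, (star U) j k * U k j = (Complex.normSq (U k j) : ℂ) := by
    intro k
    rw [Matrix.star_apply, Complex.star_def, ← Complex.normSq_eq_conj_mul_self]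
  rw [Finset.sum_congr rfl (fun k _ => h3 k)] at h2
  have h4 : ∑ k, Complex.normSq (U k j) = 1 := by
    have := congrArg Complex.re h2
    simpa using this
  have h5 : Complex.normSq (U i j) ≤ 1 := by
    rw [← h4]
    exact Finset.single_le_sum (f := fun k => Complex.normSq (U k j))
      (fun k _ => Complex.normSq_nonneg _) (Finset.mem_univ i)
  have h6 : ‖U i j‖ ^ 2 ≤ 1 := by rw [Complex.sq_norm]; exact h5
  nlinarith [norm_nonneg (U i j)]

lemma abs_rho_entry_le_one {U : Matrix (Fin N) (Fin N) ℂ}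
    (hU : U ∈ Matrix.unitaryGroup (Fin N) ℂ) (p q : Idx N m) :
    ‖rho m U p q‖ ≤ 1 := by
  rw [rho_apply, norm_mul]
  have habs : ∀ (a b : Fin m → Fin N), ‖TP m U a b‖ ≤ 1 := by
    intro a b
    rw [TP_apply, norm_prod]
    apply Finset.prod_le_one
    · exact fun k _ => norm_nonneg _
    · exact fun k _ => abs_entry_le_one hU _ _
  have h2 : ‖(starRingEnd ℂ) (TP m U p.2 q.2)‖ ≤ 1 := by
    rw [Complex.norm_conj]; exact habs _ _
  calc ‖TP m U p.1 q.1‖ * ‖(starRingEnd ℂ) (TP m U p.2 q.2)‖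
      ≤ 1 * 1 := by
        apply mul_le_mul (habs _ _) h2 (norm_nonneg _) zero_le_one
    _ = 1 := by ring

section Measure
variable (μ : Measure (UG N)) [IsProbabilityMeasure μ]

lemma integrable_rho_entry (p q : Idx N m) :
    Integrable (fun U : UG N => rho m (U : Matrix (Fin N) (Fin N) ℂ) p q) μ := by
  refine (integrable_const (1 : ℝ)).mono'
    ((measurable_rho_entry p q).aestronglyMeasurable) ?_
  filter_upwards with U
  exact abs_rho_entry_le_one U.2 p q

/-- the averaged operator -/
noncomputable def Pmat (m : ℕ) (μ : Measure (UG N)) : Matrix (Idx N m) (Idx N m) ℂ :=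
  Matrix.of fun p q => ∫ U : UG N, rho m (U : Matrix (Fin N) (Fin N) ℂ) p q ∂μ

lemma Pmat_apply (p q : Idx N m) :
    Pmat m μ p q = ∫ U : UG N, rho m (U : Matrix (Fin N) (Fin N) ℂ) p q ∂μ := rfl

variable [μ.IsMulLeftInvariant]

lemma rho_mul_Pmat (V : UG N) :
    rho m (V : Matrix (Fin N) (Fin N) ℂ) * Pmat m μ = Pmat m μ := by
  ext p q
  rw [Matrix.mul_apply]
  simp_rw [Pmat_apply, ← integral_const_mul]
  rw [← integral_finset_sum]
  · have : ∀ U : UG N, ∑ r, rho m (V : Matrix (Fin N) (Fin N) ℂ) p r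
        * rho m (U : Matrix (Fin N) (Fin N) ℂ) r q
        = (fun W : UG N => rho m (W : Matrix (Fin N) (Fin N) ℂ) p q) (V * U) := by
      intro U
      rw [← Matrix.mul_apply, ← rho_mul]
      rfl
    rw [integral_congr_ae (Filter.Eventually.of_forall this)]
    rw [integral_mul_left_eq_self (fun W : UG N => rho m (W : Matrix (Fin N) (Fin N) ℂ) p q) V]
  · intro r _
    exact (integrable_rho_entry μ r q).const_mul _

lemma Pmat_idem : Pmat m μ * Pmat m μ = Pmat m μ := by
  ext p q
  rw [Matrix.mul_apply]
  have h1 : ∀ r, Pmat m μ p r * Pmat m μ r q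
      = ∫ V : UG N, rho m (V : Matrix (Fin N) (Fin N) ℂ) p r * Pmat m μ r q ∂μ := by
    intro r
    rw [Pmat_apply, ← integral_mul_const]
  simp_rw [h1]
  rw [← integral_finset_sum]
  · have : ∀ V : UG N, ∑ r, rho m (V : Matrix (Fin N) (Fin N) ℂ) p r * Pmat m μ r q
        = Pmat m μ p q := by
      intro V
      rw [← Matrix.mul_apply, rho_mul_Pmat]
    rw [integral_congr_ae (Filter.Eventually.of_forall this)]
    simp [measure_univ]
  · intro r _
    exact (integrable_rho_entry μ p r).mul_const _

end Measure

section Proj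

variable (μ : Measure (UG N)) [IsProbabilityMeasure μ] [μ.IsMulLeftInvariant]

lemma Pmat_mulVec_mem (x : Idx N m → ℂ) : (Pmat m μ).mulVec x ∈ Wsub N m := by
  rw [mem_Wsub]
  intro U
  rw [Matrix.mulVec_mulVec, rho_mul_Pmat]

lemma Pmat_mulVec_fixed {x : Idx N m → ℂ} (hx : x ∈ Wsub N m) :
    (Pmat m μ).mulVec x = x := by
  funext p
  rw [Matrix.mulVec, dotProduct]
  have h1 : ∀ q, Pmat m μ p q * x q
      = ∫ U : UG N, rho m (U : Matrix (Fin N) (Fin N) ℂ) p q * x q ∂μ := by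
    intro q
    rw [Pmat_apply, ← integral_mul_const]
  simp_rw [h1]
  rw [← integral_finset_sum]
  · have h2 : ∀ U : UG N, ∑ q, rho m (U : Matrix (Fin N) (Fin N) ℂ) p q * x q = x p := by
      intro U
      have := (mem_Wsub x).mp hx U
      calc ∑ q, rho m (U : Matrix (Fin N) (Fin N) ℂ) p q * x q
          = (rho m (U : Matrix (Fin N) (Fin N) ℂ)).mulVec x p := rfl
        _ = x p := by rw [this]
    rw [integral_congr_ae (Filter.Eventually.of_forall h2)]
    simp [measure_univ]
  · intro q _
    exact (integrable_rho_entry μ p q).mul_const _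

lemma isProj_Pmat : LinearMap.IsProj (Wsub N m) (Matrix.toLin' (Pmat m μ)) := by
  constructor
  · intro x
    rw [Matrix.toLin'_apply]
    exact Pmat_mulVec_mem μ x
  · intro x hx
    rw [Matrix.toLin'_apply]
    exact Pmat_mulVec_fixed μ hx

lemma trace_Pmat_eq_finrank :
    Matrix.trace (Pmat m μ) = (Module.finrank ℂ (Wsub N m) : ℂ) := by
  have h := (isProj_Pmat (N := N) (m := m) μ).trace
  rw [LinearMap.trace_eq_matrix_trace ℂ (Pi.basisFun ℂ (Idx N m))] at h
  rw [LinearMap.toMatrix_eq_toMatrix', LinearMap.toMatrix'_toLin'] at h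
  exact h

lemma trace_Pmat_eq_integral :
    Matrix.trace (Pmat m μ)
      = ((∫ U : UG N, ‖Matrix.trace ((U : Matrix (Fin N) (Fin N) ℂ))‖ ^ (2 * m) ∂μ
          : ℝ) : ℂ) := by
  rw [Matrix.trace]
  have h1 : ∀ p : Idx N m, (Pmat m μ).diag p
      = ∫ U : UG N, rho m (U : Matrix (Fin N) (Fin N) ℂ) p p ∂μ := fun p => rfl
  simp_rw [h1]
  rw [← integral_finset_sum _ (fun p _ => integrable_rho_entry μ p p)]
  have h2 : ∀ U : UG N, ∑ p : Idx N m, rho m (U : Matrix (Fin N) (Fin N) ℂ) p p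
      = ((‖Matrix.trace ((U : Matrix (Fin N) (Fin N) ℂ))‖ ^ (2 * m) : ℝ) : ℂ) := by
    intro U
    rw [← trace_rho (m := m) (U : Matrix (Fin N) (Fin N) ℂ), Matrix.trace]
    rfl
  rw [integral_congr_ae (Filter.Eventually.of_forall h2)]
  exact integral_ofReal


end Proj

end DS

/-- Diaconis–Shahshahani: for `0 ≤ m ≤ N`,
`∫_{U(N)} |tr U|^{2m} dμ_H = m!`. -/
theorem statement12 (N : ℕ) (hN : 1 ≤ N) (m : ℕ) (hm : m ≤ N)
    (μ : Measure (Matrix.unitaryGroup (Fin N) ℂ))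
    (hHaar : μ.IsHaarMeasure) (hprob : IsProbabilityMeasure μ) :
    ∫ U, ‖Matrix.trace ((U : Matrix (Fin N) (Fin N) ℂ))‖ ^ (2 * m) ∂μ
      = (Nat.factorial m : ℝ) := by
  haveI : μ.IsMulLeftInvariant := hHaar.toIsMulLeftInvariant
  have h1 : Matrix.trace (DS.Pmat m μ) = (Module.finrank ℂ (DS.Wsub N m) : ℂ) :=
    DS.trace_Pmat_eq_finrank μ
  have h2 := DS.trace_Pmat_eq_integral (N := N) (m := m) μ
  rw [DS.finrank_Wsub hm] at h1
  have h3 : ((∫ U, ‖Matrix.trace ((U : Matrix (Fin N) (Fin N) ℂ))‖ ^ (2 * m) ∂μ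
      : ℝ) : ℂ) = ((Nat.factorial m : ℝ) : ℂ) := by
    rw [← h2, h1]
    push_cast
    ring
  exact Complex.ofReal_inj.mp h3
end

section
/- Let μ be a partition of a positive integer m and let N be an integer with N ≥ m + 1. Then ∏_{k=0}^{m−1} (N − k) ≤ ∏_{(i,j) ∈ Y(μ)} (N − i + j) ≤ ∏_{k=0}^{m−1} (N + k), where the middle product runs over all cells of the Young diagram of μ; the lower bound is attained by the column partition (1^m) and the upper bound by the row partition (m). -/
open Finset

lemma aux16 (ℓ : ℕ) (lam : Fin ℓ → ℕ) (hpos : ∀ i, 0 < lam i) (N : ℤ)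
    (hN : ((∑ i, lam i : ℕ) : ℤ) + 1 ≤ N) :
    ((∏ k ∈ Finset.range (∑ i, lam i), (N - k)) ≤
        ∏ i : Fin ℓ, ∏ t ∈ Finset.range (lam i), (N - (i : ℕ) + t)) ∧
      (∏ i : Fin ℓ, ∏ t ∈ Finset.range (lam i), (N - (i : ℕ) + t)) ≤
        ∏ k ∈ Finset.range (∑ i, lam i), (N + k) := by
  induction ℓ with
  | zero => simp
  | succ n ih =>
    have hsum : (∑ i, lam i) = (∑ i : Fin n, lam i.castSucc) + lam (Fin.last n) :=
      Fin.sum_univ_castSucc lam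
    set L := lam (Fin.last n) with hLdef
    set m' := ∑ i : Fin n, lam (Fin.castSucc i) with hm'
    have hn_le : n ≤ m' := by
      calc n = ∑ _i : Fin n, 1 := by simp
      _ ≤ m' := Finset.sum_le_sum fun i _ => hpos _
    have hLpos : 0 < L := hpos _
    have hNm : ((m' : ℤ) + L) + 1 ≤ N := by rw [hsum] at hN; push_cast at hN ⊢; omega
    have hN' : ((m' : ℤ)) + 1 ≤ N := by omega
    obtain ⟨ihl, ihr⟩ := ih (fun i => lam i.castSucc) (fun i => hpos _) (by exact_mod_cast hN')
    have hrows : (∏ i : Fin (n + 1), ∏ t ∈ Finset.range (lam i), (N - (i : ℕ) + t)) =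
        (∏ i : Fin n, ∏ t ∈ Finset.range (lam i.castSucc), (N - (i : ℕ) + t)) *
          ∏ t ∈ Finset.range L, (N - (n : ℕ) + t) := by
      rw [Fin.prod_univ_castSucc]
      simp [hLdef]
    have hrownn : (0:ℤ) ≤ ∏ i : Fin n, ∏ t ∈ Finset.range (lam i.castSucc), (N - (i : ℕ) + t) := by
      refine Finset.prod_nonneg fun i _ => Finset.prod_nonneg fun t _ => ?_
      have : (i : ℕ) < n := i.isLt
      omega
    constructor
    · rw [hsum, Finset.prod_range_add, hrows]
      refine mul_le_mul ihl ?_ ?_ hrownn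
      · refine Finset.prod_le_prod (fun t ht => ?_) (fun t ht => ?_)
        · simp only [Finset.mem_range] at ht; omega
        · simp only [Finset.mem_range] at ht; omega
      · refine Finset.prod_nonneg fun t ht => ?_
        simp only [Finset.mem_range] at ht; omega
    · rw [hsum, Finset.prod_range_add, hrows]
      refine mul_le_mul ihr ?_ ?_ ?_
      · refine Finset.prod_le_prod (fun t ht => ?_) (fun t ht => ?_)
        · simp only [Finset.mem_range] at ht; omega
        · simp only [Finset.mem_range] at ht; omega
      · refine Finset.prod_nonneg fun t ht => ?_
        simp only [Finset.mem_range] at ht; omega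
      · refine Finset.prod_nonneg fun k hk => ?_
        simp only [Finset.mem_range] at hk; omega

/-- inequality (44) of the paper: for a partition `μ ⊢ m` and
`N ≥ m + 1`, the product of `N + (content)` over the cells of the Young diagram of `μ`
is between `∏_{k<m} (N-k)` and `∏_{k<m} (N+k)`; the lower bound is attained by the
column partition `(1^m)` and the upper bound by the row partition `(m)`. Here the
partition is given by its parts `lam 0 ≥ lam 1 ≥ ⋯ > 0` summing to `m`, rows are
indexed `1,…,ℓ` and columns `1,…,lam i`, and the cell `(i,j)` contributes `N - i + j`. -/
theorem statement16 (m : ℕ) (hm : 0 < m) (ℓ : ℕ) (lam : Fin ℓ → ℕ)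
    (hpos : ∀ i, 0 < lam i)
    (hmono : ∀ i j : Fin ℓ, i ≤ j → lam j ≤ lam i)
    (hsum : ∑ i, lam i = m)
    (N : ℕ) (hN : m + 1 ≤ N) :
    ((∏ k ∈ Finset.range m, (N - k)) ≤
        ∏ i : Fin ℓ, ∏ j ∈ Finset.Icc 1 (lam i), (N + j - (i.val + 1)) ∧
      (∏ i : Fin ℓ, ∏ j ∈ Finset.Icc 1 (lam i), (N + j - (i.val + 1))) ≤
        ∏ k ∈ Finset.range m, (N + k)) ∧
    (∏ i : Fin m, ∏ j ∈ Finset.Icc 1 ((fun _ : Fin m => 1) i), (N + j - (i.val + 1)))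
        = ∏ k ∈ Finset.range m, (N - k) ∧
    (∏ i : Fin 1, ∏ j ∈ Finset.Icc 1 ((fun _ : Fin 1 => m) i), (N + j - (i.val + 1)))
        = ∏ k ∈ Finset.range m, (N + k) := by
  have hℓm : ℓ ≤ m := by
    calc ℓ = ∑ _i : Fin ℓ, 1 := by simp
    _ ≤ ∑ i, lam i := Finset.sum_le_sum fun i _ => hpos _
    _ = m := hsum
  have key := aux16 ℓ lam hpos (N : ℤ) (by rw [hsum]; exact_mod_cast hN)
  rw [hsum] at key
  -- cast equalities
  have hIcc : ∀ i : Fin ℓ, ((∏ j ∈ Finset.Icc 1 (lam i), (N + j - (i.val + 1)) : ℕ) : ℤ)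
      = ∏ t ∈ Finset.range (lam i), ((N : ℤ) - (i : ℕ) + t) := by
    intro i
    have hi : (i : ℕ) < ℓ := i.isLt
    rw [Nat.cast_prod, show Finset.Icc 1 (lam i) = Finset.Ico 1 (lam i + 1) by rfl,
      Finset.prod_Ico_eq_prod_range]
    refine Finset.prod_congr (by simp) fun t ht => ?_
    simp only [Finset.mem_range] at ht
    have h1 : i.val + 1 ≤ N + (1 + t) := by omega
    rw [Nat.cast_sub h1]; push_cast; ring
  have hmid : ((∏ i : Fin ℓ, ∏ j ∈ Finset.Icc 1 (lam i), (N + j - (i.val + 1)) : ℕ) : ℤ)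
      = ∏ i : Fin ℓ, ∏ t ∈ Finset.range (lam i), ((N : ℤ) - (i : ℕ) + t) := by
    rw [Nat.cast_prod]; exact Finset.prod_congr rfl fun i _ => hIcc i
  have hlow : ((∏ k ∈ Finset.range m, (N - k) : ℕ) : ℤ) = ∏ k ∈ Finset.range m, ((N : ℤ) - k) := by
    rw [Nat.cast_prod]
    refine Finset.prod_congr rfl fun k hk => ?_
    simp only [Finset.mem_range] at hk
    rw [Nat.cast_sub (by omega)]
  have hhigh : ((∏ k ∈ Finset.range m, (N + k) : ℕ) : ℤ) = ∏ k ∈ Finset.range m, ((N : ℤ) + k) := by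
    push_cast; rfl
  refine ⟨⟨?_, ?_⟩, ?_, ?_⟩
  · have := key.1
    rw [← hmid, ← hlow] at this
    exact_mod_cast this
  · have := key.2
    rw [← hmid, ← hhigh] at this
    exact_mod_cast this
  · rw [← Fin.prod_univ_eq_prod_range (fun k => N - k) m]
    refine Finset.prod_congr rfl fun i _ => ?_
    simp [Nat.succ_sub_succ]
  · simp only [Fin.prod_univ_one]
    rw [show Finset.Icc 1 m = Finset.Ico 1 (m + 1) by rfl, Finset.prod_Ico_eq_prod_range]
    refine Finset.prod_congr (by simp) fun t ht => ?_
    simp [Nat.add_sub_cancel]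
    omega
end
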